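/- Let n ≥ 4 and L > 2n be integers and fix x ∈ Λ_L. For every pair of adjacent sites u, v ∈ Λ_L with η^x(u) ≠ η^x(v) (so that the exchange produces a new configuration), one has H(σ^{u,v}η^x) ≥ H(η^x) + 2 = −2n(n−1) + 2: every nontrivial single particle move from a square configuration raises the energy by at least 2. -/

import Mathlib

open scoped Classical

noncomputable section

/-- A site of the discrete torus `Λ_L`. -/
abbrev Site (L : ℕ) := ZMod L × ZMod L

/-- Two sites of the discrete torus are adjacent if their difference is a unit vector. -/
def torusAdj (L : ℕ) (u v : Site L) : Prop :=
  u - v = (1, 0) ∨ u - v = (-1, 0) ∨ u - v = (0, 1) ∨ u - v = (0, -1)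

/-- `e(S)`: the number of unordered pairs of adjacent sites contained in `S`. -/
def torusE (L : ℕ) (S : Finset (Site L)) : ℕ :=
  ((S ×ˢ S).filter fun p => torusAdj L p.1 p.2).card / 2

/-- A lattice-gas configuration on `Λ_L`. -/
abbrev Config (L : ℕ) := Site L → Bool

/-- The set of sites occupied by the configuration `η`. -/
def occupied (L : ℕ) [NeZero L] (η : Config L) : Finset (Site L) :=
  Finset.univ.filter fun x => η x = true

/-- The Hamiltonian `H(η) = −Σ η(x)η(y)` (sum over unordered pairs of adjacent sites),
i.e. minus the number of adjacent occupied pairs, as an integer. -/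
def confH (L : ℕ) [NeZero L] (η : Config L) : ℤ :=
  -(torusE L (occupied L η) : ℤ)

/-- `σ^{u,v}η`: the configuration obtained from `η` by exchanging the occupation
variables at `u` and `v`. -/
def swapConf (L : ℕ) (η : Config L) (u v : Site L) : Config L :=
  fun z => if z = u then η v else if z = v then η u else η z

/-- The occupied set `Q_x = x + {0,…,n−1}²` of the square configuration `η^x`. -/
def squareSet (L n : ℕ) (x : Site L) : Finset (Site L) :=
  (Finset.range n ×ˢ Finset.range n).image fun p => x + ((p.1 : ZMod L), (p.2 : ZMod L))

/-- The square configuration `η^x`, whose occupied set is `Q_x`. -/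
def squareConf (L n : ℕ) (x : Site L) : Config L :=
  fun z => decide (z ∈ squareSet L n x)


section MoveHelpers
set_option linter.unusedSectionVars false
open Finset
variable {L : ℕ} [NeZero L]

lemma one_val' (hL : 1 < L) : (1 : ZMod L).val = 1 := by
  rw [ZMod.val_one_eq_one_mod, Nat.mod_eq_of_lt hL]

lemma neg_one_val' (hL : 1 < L) : (-1 : ZMod L).val = L - 1 := by
  have h : ((L - 1 : ℕ) : ZMod L) = -1 := by
    push_cast [Nat.cast_sub (by omega : 1 ≤ L)]
    rw [ZMod.natCast_self]; ring
  rw [← h, ZMod.val_cast_of_lt (by omega)]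

lemma one_ne_zero'' (hL : 2 < L) : (1 : ZMod L) ≠ 0 := by
  intro h
  have := congrArg ZMod.val h
  rw [one_val' (by omega), ZMod.val_zero] at this
  omega

lemma one_ne_zero3 (hL : 2 < L) : (1 : ZMod L) ≠ 0 := one_ne_zero'' hL

lemma neg_one_ne_zero' (hL : 2 < L) : (-1 : ZMod L) ≠ 0 := by
  intro h
  have := congrArg ZMod.val h
  rw [neg_one_val' (by omega), ZMod.val_zero] at this
  omega

lemma one_ne_neg_one' (hL : 2 < L) : (1 : ZMod L) ≠ -1 := by
  intro h
  have := congrArg ZMod.val h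
  rw [one_val' (by omega), neg_one_val' (by omega)] at this
  omega

lemma val_add_one' (hL : 1 < L) (c : ZMod L) :
    (c + 1).val = if c.val + 1 = L then 0 else c.val + 1 := by
  have h : (c + 1).val = (c.val + 1) % L := by
    rw [ZMod.val_add, ZMod.val_one_eq_one_mod, Nat.mod_eq_of_lt hL]
  rw [h]
  split_ifs with he
  · rw [he, Nat.mod_self]
  · exact Nat.mod_eq_of_lt (by have := ZMod.val_lt c; omega)

lemma val_sub_one' (hL : 1 < L) (c : ZMod L) :
    (c - 1).val = if c.val = 0 then L - 1 else c.val - 1 := by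
  have h : (c - 1).val = (c.val + (L - 1)) % L := by
    rw [sub_eq_add_neg, ZMod.val_add, neg_one_val' hL]
  rw [h]
  split_ifs with he
  · simp only [he, Nat.zero_add]; exact Nat.mod_eq_of_lt (by omega)
  · have h2 : c.val + (L - 1) = (c.val - 1) + L := by omega
    rw [h2, Nat.add_mod_right]
    exact Nat.mod_eq_of_lt (by have := ZMod.val_lt c; omega)

lemma val_add_neg_one (hL : 1 < L) (c : ZMod L) :
    (c + (-1)).val = if c.val = 0 then L - 1 else c.val - 1 := by
  rw [← sub_eq_add_neg]; exact val_sub_one' hL c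

lemma val_sub_neg_one (hL : 1 < L) (c : ZMod L) :
    (c - (-1)).val = if c.val + 1 = L then 0 else c.val + 1 := by
  rw [sub_neg_eq_add]; exact val_add_one' hL c

lemma mem_squareSet' {n : ℕ} (hn : n ≤ L) {x z : Site L} :
    z ∈ squareSet L n x ↔ (z.1 - x.1).val < n ∧ (z.2 - x.2).val < n := by
  simp only [squareSet, mem_image, mem_product, mem_range, Prod.exists]
  constructor
  · rintro ⟨i, j, ⟨hi, hj⟩, rfl⟩
    simp only [Prod.fst_add, Prod.snd_add]
    constructor
    · rw [add_comm, add_sub_cancel_right, ZMod.val_cast_of_lt (by omega)]; exact hi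
    · rw [add_comm, add_sub_cancel_right, ZMod.val_cast_of_lt (by omega)]; exact hj
  · rintro ⟨h1, h2⟩
    refine ⟨(z.1 - x.1).val, (z.2 - x.2).val, ⟨h1, h2⟩, ?_⟩
    have e1 : ((z.1 - x.1).val : ZMod L) = z.1 - x.1 := by
      rw [ZMod.natCast_val, ZMod.cast_id]
    have e2 : ((z.2 - x.2).val : ZMod L) = z.2 - x.2 := by
      rw [ZMod.natCast_val, ZMod.cast_id]
    have : x + ((((z.1 - x.1).val : ZMod L)), (((z.2 - x.2).val : ZMod L))) = z := by
      rw [e1, e2]; ext <;> simp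
    exact this

lemma mem_shift {n : ℕ} (hn : n ≤ L) {x z : Site L} {c d : ZMod L} :
    z + (c, d) ∈ squareSet L n x ↔ ((z.1 - x.1) + c).val < n ∧ ((z.2 - x.2) + d).val < n := by
  rw [mem_squareSet' hn]
  have e1 : (z + (c, d)).1 - x.1 = (z.1 - x.1) + c := by show z.1 + c - x.1 = _; ring
  have e2 : (z + (c, d)).2 - x.2 = (z.2 - x.2) + d := by show z.2 + d - x.2 = _; ring
  rw [e1, e2]

lemma mem_shift' {n : ℕ} (hn : n ≤ L) {x z : Site L} {c d : ZMod L} :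
    z - (c, d) ∈ squareSet L n x ↔ ((z.1 - x.1) - c).val < n ∧ ((z.2 - x.2) - d).val < n := by
  rw [mem_squareSet' hn]
  have e1 : (z - (c, d)).1 - x.1 = (z.1 - x.1) - c := by show z.1 - c - x.1 = _; ring
  have e2 : (z - (c, d)).2 - x.2 = (z.2 - x.2) - d := by show z.2 - d - x.2 = _; ring
  rw [e1, e2]

lemma torusAdj_symm {u v : Site L} (h : torusAdj L u v) : torusAdj L v u := by
  have e : v - u = -(u - v) := by ring
  rcases h with h | h | h | h
  · right; left; rw [e, h]; ext <;> simp
  · left; rw [e, h]; ext <;> simp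
  · right; right; right; rw [e, h]; ext <;> simp
  · right; right; left; rw [e, h]; ext <;> simp

lemma torusAdj_irrefl (hL : 2 < L) (u : Site L) : ¬ torusAdj L u u := by
  intro h
  rcases h with h | h | h | h <;> rw [sub_self] at h
  · exact one_ne_zero'' hL (congrArg Prod.fst h).symm
  · exact neg_one_ne_zero' hL (congrArg Prod.fst h).symm
  · exact one_ne_zero'' hL (congrArg Prod.snd h).symm
  · exact neg_one_ne_zero' hL (congrArg Prod.snd h).symm

lemma card_slice (S : Finset (Site L)) (d : Site L) :
    ((S ×ˢ S).filter fun p => p.1 - p.2 = d).card = (S.filter fun a => a - d ∈ S).card := by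
  apply Finset.card_nbij' (i := fun p => p.1) (j := fun a => (a, a - d))
  · rintro ⟨a, b⟩ hp
    simp only [mem_coe, mem_filter, mem_product] at hp ⊢
    have hb : a - d = b := by rw [← hp.2]; ring
    exact ⟨hp.1.1, hb ▸ hp.1.2⟩
  · intro a ha
    simp only [mem_coe, mem_filter, mem_product] at ha ⊢
    exact ⟨⟨ha.1, ha.2⟩, by ring⟩
  · rintro ⟨a, b⟩ hp
    simp only [mem_coe, mem_filter, mem_product] at hp
    have hb : a - d = b := by rw [← hp.2]; ring
    simp [hb]
  · intro a ha
    rfl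


lemma pairs_card_eq' (hL : 2 < L) (S : Finset (Site L)) :
    ((S ×ˢ S).filter fun p => torusAdj L p.1 p.2).card =
      (S.filter fun a => a - ((1:ZMod L), (0:ZMod L)) ∈ S).card
      + (S.filter fun a => a - ((-1:ZMod L), (0:ZMod L)) ∈ S).card
      + (S.filter fun a => a - ((0:ZMod L), (1:ZMod L)) ∈ S).card
      + (S.filter fun a => a - ((0:ZMod L), (-1:ZMod L)) ∈ S).card := by
  have key : ∀ d1 d2 : Site L, d1 ≠ d2 →
      Disjoint ((S ×ˢ S).filter fun p => p.1 - p.2 = d1)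
        ((S ×ˢ S).filter fun p => p.1 - p.2 = d2) := by
    intro d1 d2 hne
    rw [Finset.disjoint_left]
    rintro p hp1 hp2
    simp only [mem_filter] at hp1 hp2
    exact hne (hp1.2.symm.trans hp2.2)
  have hrw : ((S ×ˢ S).filter fun p => torusAdj L p.1 p.2)
      = (((S ×ˢ S).filter fun p => p.1 - p.2 = ((1:ZMod L), (0:ZMod L)))
      ∪ ((S ×ˢ S).filter fun p => p.1 - p.2 = ((-1:ZMod L), (0:ZMod L)))
      ∪ ((S ×ˢ S).filter fun p => p.1 - p.2 = ((0:ZMod L), (1:ZMod L)))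
      ∪ ((S ×ˢ S).filter fun p => p.1 - p.2 = ((0:ZMod L), (-1:ZMod L)))) := by
    ext p
    simp only [mem_union, mem_filter]
    simp only [torusAdj]
    tauto
  have d12 : ((1:ZMod L), (0:ZMod L)) ≠ ((-1:ZMod L), (0:ZMod L)) :=
    fun h => one_ne_neg_one' hL (congrArg Prod.fst h)
  have d13 : ((1:ZMod L), (0:ZMod L)) ≠ ((0:ZMod L), (1:ZMod L)) :=
    fun h => one_ne_zero'' hL (congrArg Prod.fst h)
  have d14 : ((1:ZMod L), (0:ZMod L)) ≠ ((0:ZMod L), (-1:ZMod L)) :=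
    fun h => one_ne_zero'' hL (congrArg Prod.fst h)
  have d23 : ((-1:ZMod L), (0:ZMod L)) ≠ ((0:ZMod L), (1:ZMod L)) :=
    fun h => neg_one_ne_zero' hL (congrArg Prod.fst h)
  have d24 : ((-1:ZMod L), (0:ZMod L)) ≠ ((0:ZMod L), (-1:ZMod L)) :=
    fun h => neg_one_ne_zero' hL (congrArg Prod.fst h)
  have d34 : ((0:ZMod L), (1:ZMod L)) ≠ ((0:ZMod L), (-1:ZMod L)) :=
    fun h => one_ne_neg_one' hL (congrArg Prod.snd h)
  rw [hrw, card_union_of_disjoint, card_union_of_disjoint, card_union_of_disjoint,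
      card_slice, card_slice, card_slice, card_slice]
  · exact key _ _ d12
  · rw [disjoint_union_left]
    exact ⟨key _ _ d13, key _ _ d23⟩
  · rw [disjoint_union_left, disjoint_union_left]
    exact ⟨⟨key _ _ d14, key _ _ d24⟩, key _ _ d34⟩


lemma card_pairs_erase (hL : 2 < L) {S : Finset (Site L)} {u : Site L} (hu : u ∈ S) :
    ((S ×ˢ S).filter fun p => torusAdj L p.1 p.2).card =
    (((S.erase u) ×ˢ (S.erase u)).filter fun p => torusAdj L p.1 p.2).card
      + 2 * ((S.erase u).filter fun w => torusAdj L u w).card := by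
  set T := S.erase u with hT
  set N := T.filter fun w => torusAdj L u w with hN
  have hNsub : ∀ w ∈ N, w ≠ u ∧ w ∈ S := by
    intro w hw
    rw [hN, mem_filter, hT, mem_erase] at hw
    exact ⟨hw.1.1, hw.1.2⟩
  have hset : ((S ×ˢ S).filter fun p => torusAdj L p.1 p.2)
      = (((T ×ˢ T).filter fun p => torusAdj L p.1 p.2) ∪ ({u} ×ˢ N)) ∪ (N ×ˢ {u}) := by
    ext ⟨a, b⟩
    simp only [mem_union, mem_filter, mem_product, mem_singleton, hN, hT, mem_erase]
    constructor
    · rintro ⟨⟨ha, hb⟩, hadj⟩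
      by_cases hau : a = u
      · have hbu : b ≠ u := fun hbu => torusAdj_irrefl hL u (by rw [hau, hbu] at hadj; exact hadj)
        exact Or.inl (Or.inr ⟨hau, ⟨⟨hbu, hb⟩, by rw [← hau]; exact hadj⟩⟩)
      · by_cases hbu : b = u
        · exact Or.inr ⟨⟨⟨hau, ha⟩, torusAdj_symm (by rw [← hbu]; exact hadj)⟩, hbu⟩
        · exact Or.inl (Or.inl ⟨⟨⟨hau, ha⟩, ⟨hbu, hb⟩⟩, hadj⟩)
    · rintro ((⟨⟨⟨_, ha⟩, ⟨_, hb⟩⟩, hadj⟩ | ⟨hau, ⟨⟨_, hb⟩, hadj⟩⟩) | ⟨⟨⟨_, ha⟩, hadj⟩, hbu⟩)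
      · exact ⟨⟨ha, hb⟩, hadj⟩
      · exact ⟨⟨by rw [hau]; exact hu, hb⟩, by rw [hau]; exact hadj⟩
      · exact ⟨⟨ha, by rw [hbu]; exact hu⟩, by rw [hbu]; exact torusAdj_symm hadj⟩
  rw [hset, card_union_of_disjoint, card_union_of_disjoint, card_product, card_product,
      card_singleton, one_mul, mul_one]
  · ring
  · rw [Finset.disjoint_left]
    rintro ⟨a, b⟩ hp1 hp2
    simp only [mem_filter, mem_product, hT, mem_erase] at hp1
    simp only [mem_product, mem_singleton] at hp2
    exact hp1.1.1.1 hp2.1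
  · rw [Finset.disjoint_left]
    rintro ⟨a, b⟩ hp1 hp2
    simp only [mem_product, mem_singleton] at hp2
    rcases Finset.mem_union.mp hp1 with h | h
    · simp only [mem_filter, mem_product, hT, mem_erase] at h
      exact h.1.2.1 hp2.2
    · simp only [mem_product, mem_singleton] at h
      exact (hNsub b h.2).1 hp2.2

lemma card_pairs_insert (hL : 2 < L) {T : Finset (Site L)} {v : Site L} (hv : v ∉ T) :
    (((insert v T) ×ˢ (insert v T)).filter fun p => torusAdj L p.1 p.2).card =
    ((T ×ˢ T).filter fun p => torusAdj L p.1 p.2).card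
      + 2 * (T.filter fun w => torusAdj L v w).card := by
  have := card_pairs_erase hL (S := insert v T) (u := v) (mem_insert_self v T)
  rwa [erase_insert hv] at this

lemma card_rect (x : Site L) (s t : Finset ℕ) (hs : ∀ i ∈ s, i < L) (ht : ∀ j ∈ t, j < L) :
    (Finset.univ.filter fun z : Site L => (z.1 - x.1).val ∈ s ∧ (z.2 - x.2).val ∈ t).card
      = s.card * t.card := by
  rw [← Finset.card_product]
  apply Finset.card_nbij' (i := fun z => ((z.1 - x.1).val, (z.2 - x.2).val))
    (j := fun p => (x.1 + (p.1 : ZMod L), x.2 + (p.2 : ZMod L)))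
  · intro z hz
    simp only [mem_coe, mem_filter, mem_univ, true_and] at hz
    simpa only [mem_coe, mem_product] using hz
  · intro p hp
    simp only [mem_coe, mem_product] at hp
    simp only [mem_coe, mem_filter, mem_univ, true_and]
    constructor
    · rw [add_sub_cancel_left, ZMod.val_cast_of_lt (hs _ hp.1)]; exact hp.1
    · rw [add_sub_cancel_left, ZMod.val_cast_of_lt (ht _ hp.2)]; exact hp.2
  · intro z _
    have e1 : ((z.1 - x.1).val : ZMod L) = z.1 - x.1 := by rw [ZMod.natCast_val, ZMod.cast_id]
    have e2 : ((z.2 - x.2).val : ZMod L) = z.2 - x.2 := by rw [ZMod.natCast_val, ZMod.cast_id]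
    ext
    · show x.1 + ((z.1 - x.1).val : ZMod L) = z.1
      rw [e1]; ring
    · show x.2 + ((z.2 - x.2).val : ZMod L) = z.2
      rw [e2]; ring
  · intro p hp
    simp only [mem_coe, mem_product] at hp
    ext
    · show (x.1 + (p.1 : ZMod L) - x.1).val = p.1
      rw [add_sub_cancel_left, ZMod.val_cast_of_lt (hs _ hp.1)]
    · show (x.2 + (p.2 : ZMod L) - x.2).val = p.2
      rw [add_sub_cancel_left, ZMod.val_cast_of_lt (ht _ hp.2)]


lemma count1 {n : ℕ} (hn : 4 ≤ n) (hL : 2 * n < L) (x : Site L) :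
    ((squareSet L n x).filter fun a => a - ((1:ZMod L), (0:ZMod L)) ∈ squareSet L n x).card
      = (n - 1) * n := by
  have hnL : n ≤ L := by omega
  have hL1 : 1 < L := by omega
  have heq : (squareSet L n x).filter (fun a => a - ((1:ZMod L), (0:ZMod L)) ∈ squareSet L n x)
      = Finset.univ.filter fun z : Site L =>
          (z.1 - x.1).val ∈ Finset.Ico 1 n ∧ (z.2 - x.2).val ∈ Finset.range n := by
    ext z
    simp only [mem_filter, mem_squareSet' hnL, mem_univ, true_and, mem_Ico, mem_range]
    have e1 : (z - ((1:ZMod L), (0:ZMod L))).1 - x.1 = (z.1 - x.1) - 1 := by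
      show z.1 - 1 - x.1 = z.1 - x.1 - 1; ring
    have e2 : (z - ((1:ZMod L), (0:ZMod L))).2 - x.2 = z.2 - x.2 := by
      show z.2 - 0 - x.2 = z.2 - x.2; ring
    rw [e1, e2, val_sub_one' hL1]
    have hv := ZMod.val_lt (z.1 - x.1)
    split_ifs with h0 <;> omega
  rw [heq, card_rect x _ _ (fun i hi => by simp only [mem_Ico] at hi; omega)
    (fun j hj => by simp only [mem_range] at hj; omega), Nat.card_Ico, card_range]

lemma count2 {n : ℕ} (hn : 4 ≤ n) (hL : 2 * n < L) (x : Site L) :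
    ((squareSet L n x).filter fun a => a - ((-1:ZMod L), (0:ZMod L)) ∈ squareSet L n x).card
      = (n - 1) * n := by
  have hnL : n ≤ L := by omega
  have hL1 : 1 < L := by omega
  have heq : (squareSet L n x).filter (fun a => a - ((-1:ZMod L), (0:ZMod L)) ∈ squareSet L n x)
      = Finset.univ.filter fun z : Site L =>
          (z.1 - x.1).val ∈ Finset.range (n - 1) ∧ (z.2 - x.2).val ∈ Finset.range n := by
    ext z
    simp only [mem_filter, mem_squareSet' hnL, mem_univ, true_and, mem_range]
    have e1 : (z - ((-1:ZMod L), (0:ZMod L))).1 - x.1 = (z.1 - x.1) + 1 := by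
      show z.1 - (-1) - x.1 = z.1 - x.1 + 1; ring
    have e2 : (z - ((-1:ZMod L), (0:ZMod L))).2 - x.2 = z.2 - x.2 := by
      show z.2 - 0 - x.2 = z.2 - x.2; ring
    rw [e1, e2, val_add_one' hL1]
    have hv := ZMod.val_lt (z.1 - x.1)
    split_ifs with h0 <;> omega
  rw [heq, card_rect x _ _ (fun i hi => by simp only [mem_range] at hi; omega)
    (fun j hj => by simp only [mem_range] at hj; omega), card_range, card_range]

lemma count3 {n : ℕ} (hn : 4 ≤ n) (hL : 2 * n < L) (x : Site L) :
    ((squareSet L n x).filter fun a => a - ((0:ZMod L), (1:ZMod L)) ∈ squareSet L n x).card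
      = n * (n - 1) := by
  have hnL : n ≤ L := by omega
  have hL1 : 1 < L := by omega
  have heq : (squareSet L n x).filter (fun a => a - ((0:ZMod L), (1:ZMod L)) ∈ squareSet L n x)
      = Finset.univ.filter fun z : Site L =>
          (z.1 - x.1).val ∈ Finset.range n ∧ (z.2 - x.2).val ∈ Finset.Ico 1 n := by
    ext z
    simp only [mem_filter, mem_squareSet' hnL, mem_univ, true_and, mem_Ico, mem_range]
    have e1 : (z - ((0:ZMod L), (1:ZMod L))).1 - x.1 = z.1 - x.1 := by
      show z.1 - 0 - x.1 = z.1 - x.1; ring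
    have e2 : (z - ((0:ZMod L), (1:ZMod L))).2 - x.2 = (z.2 - x.2) - 1 := by
      show z.2 - 1 - x.2 = z.2 - x.2 - 1; ring
    rw [e1, e2, val_sub_one' hL1]
    have hv := ZMod.val_lt (z.2 - x.2)
    split_ifs with h0 <;> omega
  rw [heq, card_rect x _ _ (fun i hi => by simp only [mem_range] at hi; omega)
    (fun j hj => by simp only [mem_Ico] at hj; omega), Nat.card_Ico, card_range]

lemma count4 {n : ℕ} (hn : 4 ≤ n) (hL : 2 * n < L) (x : Site L) :
    ((squareSet L n x).filter fun a => a - ((0:ZMod L), (-1:ZMod L)) ∈ squareSet L n x).card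
      = n * (n - 1) := by
  have hnL : n ≤ L := by omega
  have hL1 : 1 < L := by omega
  have heq : (squareSet L n x).filter (fun a => a - ((0:ZMod L), (-1:ZMod L)) ∈ squareSet L n x)
      = Finset.univ.filter fun z : Site L =>
          (z.1 - x.1).val ∈ Finset.range n ∧ (z.2 - x.2).val ∈ Finset.range (n - 1) := by
    ext z
    simp only [mem_filter, mem_squareSet' hnL, mem_univ, true_and, mem_range]
    have e1 : (z - ((0:ZMod L), (-1:ZMod L))).1 - x.1 = z.1 - x.1 := by
      show z.1 - 0 - x.1 = z.1 - x.1; ring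
    have e2 : (z - ((0:ZMod L), (-1:ZMod L))).2 - x.2 = (z.2 - x.2) + 1 := by
      show z.2 - (-1) - x.2 = z.2 - x.2 + 1; ring
    rw [e1, e2, val_add_one' hL1]
    have hv := ZMod.val_lt (z.2 - x.2)
    split_ifs with h0 <;> omega
  rw [heq, card_rect x _ _ (fun i hi => by simp only [mem_range] at hi; omega)
    (fun j hj => by simp only [mem_range] at hj; omega), card_range, card_range]

lemma E2_square {n : ℕ} (hn : 4 ≤ n) (hL : 2 * n < L) (x : Site L) :
    (((squareSet L n x) ×ˢ (squareSet L n x)).filter fun p => torusAdj L p.1 p.2).card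
      = 4 * (n * (n - 1)) := by
  rw [pairs_card_eq' (by omega), count1 hn hL, count2 hn hL, count3 hn hL, count4 hn hL]
  ring

lemma no_nbrs {n : ℕ} (hn : 4 ≤ n) (hL : 2 * n < L) {x u v : Site L} (huv : torusAdj L u v)
    (hu : u ∈ squareSet L n x) (hv : v ∉ squareSet L n x) :
    ((squareSet L n x).erase u).filter (fun w => torusAdj L v w) = ∅ := by
  have hnL : n ≤ L := by omega
  have hL1 : 1 < L := by omega
  rw [Finset.eq_empty_iff_forall_notMem]
  rintro w hw
  rw [mem_filter, mem_erase] at hw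
  obtain ⟨⟨hwu, hwQ⟩, hadj⟩ := hw
  rw [mem_squareSet' hnL] at hv
  rcases huv with h1 | h1 | h1 | h1 <;> rcases hadj with h2 | h2 | h2 | h2
  · -- case P1 P1
    have hu' : u = v + (((1:ZMod L)), ((0:ZMod L))) := by rw [← h1]; ring
    rw [hu', mem_shift hnL] at hu
    have hw' : w = v - (((1:ZMod L)), ((0:ZMod L))) := by rw [← h2]; ring
    rw [hw', mem_shift' hnL] at hwQ
    simp only [add_zero, sub_zero] at hu hwQ
    have ha1 := hu.1
    have ha2 := hwQ.1
    have hb1 := hu.2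
    rw [val_add_one' hL1] at ha1
    rw [val_sub_one' hL1] at ha2
    have hva := ZMod.val_lt (v.1 - x.1)
    split_ifs at ha1 ha2 <;> omega
  · -- case P1 M1
    have hu' : u = v + (((1:ZMod L)), ((0:ZMod L))) := by rw [← h1]; ring
    rw [hu', mem_shift hnL] at hu
    have hw' : w = v - (((-1:ZMod L)), ((0:ZMod L))) := by rw [← h2]; ring
    rw [hw', mem_shift' hnL] at hwQ
    simp only [add_zero, sub_zero] at hu hwQ
    refine absurd ?_ hwu
    have e : u - w = (u - v) + (v - w) := by ring
    rw [h1, h2] at e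
    have e0 : u - w = 0 := by rw [e]; ext <;> simp
    exact (sub_eq_zero.mp e0).symm
  · -- case P1 P2
    have hu' : u = v + (((1:ZMod L)), ((0:ZMod L))) := by rw [← h1]; ring
    rw [hu', mem_shift hnL] at hu
    have hw' : w = v - (((0:ZMod L)), ((1:ZMod L))) := by rw [← h2]; ring
    rw [hw', mem_shift' hnL] at hwQ
    simp only [add_zero, sub_zero] at hu hwQ
    exact hv ⟨hwQ.1, hu.2⟩
  · -- case P1 M2
    have hu' : u = v + (((1:ZMod L)), ((0:ZMod L))) := by rw [← h1]; ring
    rw [hu', mem_shift hnL] at hu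
    have hw' : w = v - (((0:ZMod L)), ((-1:ZMod L))) := by rw [← h2]; ring
    rw [hw', mem_shift' hnL] at hwQ
    simp only [add_zero, sub_zero] at hu hwQ
    exact hv ⟨hwQ.1, hu.2⟩
  · -- case M1 P1
    have hu' : u = v + (((-1:ZMod L)), ((0:ZMod L))) := by rw [← h1]; ring
    rw [hu', mem_shift hnL] at hu
    have hw' : w = v - (((1:ZMod L)), ((0:ZMod L))) := by rw [← h2]; ring
    rw [hw', mem_shift' hnL] at hwQ
    simp only [add_zero, sub_zero] at hu hwQ
    refine absurd ?_ hwu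
    have e : u - w = (u - v) + (v - w) := by ring
    rw [h1, h2] at e
    have e0 : u - w = 0 := by rw [e]; ext <;> simp
    exact (sub_eq_zero.mp e0).symm
  · -- case M1 M1
    have hu' : u = v + (((-1:ZMod L)), ((0:ZMod L))) := by rw [← h1]; ring
    rw [hu', mem_shift hnL] at hu
    have hw' : w = v - (((-1:ZMod L)), ((0:ZMod L))) := by rw [← h2]; ring
    rw [hw', mem_shift' hnL] at hwQ
    simp only [add_zero, sub_zero] at hu hwQ
    have ha1 := hu.1
    have ha2 := hwQ.1
    have hb1 := hu.2
    rw [val_add_neg_one hL1] at ha1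
    rw [val_sub_neg_one hL1] at ha2
    have hva := ZMod.val_lt (v.1 - x.1)
    split_ifs at ha1 ha2 <;> omega
  · -- case M1 P2
    have hu' : u = v + (((-1:ZMod L)), ((0:ZMod L))) := by rw [← h1]; ring
    rw [hu', mem_shift hnL] at hu
    have hw' : w = v - (((0:ZMod L)), ((1:ZMod L))) := by rw [← h2]; ring
    rw [hw', mem_shift' hnL] at hwQ
    simp only [add_zero, sub_zero] at hu hwQ
    exact hv ⟨hwQ.1, hu.2⟩
  · -- case M1 M2
    have hu' : u = v + (((-1:ZMod L)), ((0:ZMod L))) := by rw [← h1]; ring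
    rw [hu', mem_shift hnL] at hu
    have hw' : w = v - (((0:ZMod L)), ((-1:ZMod L))) := by rw [← h2]; ring
    rw [hw', mem_shift' hnL] at hwQ
    simp only [add_zero, sub_zero] at hu hwQ
    exact hv ⟨hwQ.1, hu.2⟩
  · -- case P2 P1
    have hu' : u = v + (((0:ZMod L)), ((1:ZMod L))) := by rw [← h1]; ring
    rw [hu', mem_shift hnL] at hu
    have hw' : w = v - (((1:ZMod L)), ((0:ZMod L))) := by rw [← h2]; ring
    rw [hw', mem_shift' hnL] at hwQ
    simp only [add_zero, sub_zero] at hu hwQ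
    exact hv ⟨hu.1, hwQ.2⟩
  · -- case P2 M1
    have hu' : u = v + (((0:ZMod L)), ((1:ZMod L))) := by rw [← h1]; ring
    rw [hu', mem_shift hnL] at hu
    have hw' : w = v - (((-1:ZMod L)), ((0:ZMod L))) := by rw [← h2]; ring
    rw [hw', mem_shift' hnL] at hwQ
    simp only [add_zero, sub_zero] at hu hwQ
    exact hv ⟨hu.1, hwQ.2⟩
  · -- case P2 P2
    have hu' : u = v + (((0:ZMod L)), ((1:ZMod L))) := by rw [← h1]; ring
    rw [hu', mem_shift hnL] at hu
    have hw' : w = v - (((0:ZMod L)), ((1:ZMod L))) := by rw [← h2]; ring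
    rw [hw', mem_shift' hnL] at hwQ
    simp only [add_zero, sub_zero] at hu hwQ
    have ha1 := hu.2
    have ha2 := hwQ.2
    have hb1 := hu.1
    rw [val_add_one' hL1] at ha1
    rw [val_sub_one' hL1] at ha2
    have hva := ZMod.val_lt (v.2 - x.2)
    split_ifs at ha1 ha2 <;> omega
  · -- case P2 M2
    have hu' : u = v + (((0:ZMod L)), ((1:ZMod L))) := by rw [← h1]; ring
    rw [hu', mem_shift hnL] at hu
    have hw' : w = v - (((0:ZMod L)), ((-1:ZMod L))) := by rw [← h2]; ring
    rw [hw', mem_shift' hnL] at hwQ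
    simp only [add_zero, sub_zero] at hu hwQ
    refine absurd ?_ hwu
    have e : u - w = (u - v) + (v - w) := by ring
    rw [h1, h2] at e
    have e0 : u - w = 0 := by rw [e]; ext <;> simp
    exact (sub_eq_zero.mp e0).symm
  · -- case M2 P1
    have hu' : u = v + (((0:ZMod L)), ((-1:ZMod L))) := by rw [← h1]; ring
    rw [hu', mem_shift hnL] at hu
    have hw' : w = v - (((1:ZMod L)), ((0:ZMod L))) := by rw [← h2]; ring
    rw [hw', mem_shift' hnL] at hwQ
    simp only [add_zero, sub_zero] at hu hwQ
    exact hv ⟨hu.1, hwQ.2⟩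
  · -- case M2 M1
    have hu' : u = v + (((0:ZMod L)), ((-1:ZMod L))) := by rw [← h1]; ring
    rw [hu', mem_shift hnL] at hu
    have hw' : w = v - (((-1:ZMod L)), ((0:ZMod L))) := by rw [← h2]; ring
    rw [hw', mem_shift' hnL] at hwQ
    simp only [add_zero, sub_zero] at hu hwQ
    exact hv ⟨hu.1, hwQ.2⟩
  · -- case M2 P2
    have hu' : u = v + (((0:ZMod L)), ((-1:ZMod L))) := by rw [← h1]; ring
    rw [hu', mem_shift hnL] at hu
    have hw' : w = v - (((0:ZMod L)), ((1:ZMod L))) := by rw [← h2]; ring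
    rw [hw', mem_shift' hnL] at hwQ
    simp only [add_zero, sub_zero] at hu hwQ
    refine absurd ?_ hwu
    have e : u - w = (u - v) + (v - w) := by ring
    rw [h1, h2] at e
    have e0 : u - w = 0 := by rw [e]; ext <;> simp
    exact (sub_eq_zero.mp e0).symm
  · -- case M2 M2
    have hu' : u = v + (((0:ZMod L)), ((-1:ZMod L))) := by rw [← h1]; ring
    rw [hu', mem_shift hnL] at hu
    have hw' : w = v - (((0:ZMod L)), ((-1:ZMod L))) := by rw [← h2]; ring
    rw [hw', mem_shift' hnL] at hwQ
    simp only [add_zero, sub_zero] at hu hwQ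
    have ha1 := hu.2
    have ha2 := hwQ.2
    have hb1 := hu.1
    rw [val_add_neg_one hL1] at ha1
    rw [val_sub_neg_one hL1] at ha2
    have hva := ZMod.val_lt (v.2 - x.2)
    split_ifs at ha1 ha2 <;> omega

lemma two_nbrs {n : ℕ} (hn : 4 ≤ n) (hL : 2 * n < L) {x u : Site L}
    (hu : u ∈ squareSet L n x) :
    2 ≤ ((squareSet L n x).filter fun w => torusAdj L u w).card := by
  have hnL : n ≤ L := by omega
  have hL1 : 1 < L := by omega
  obtain ⟨hA, hB⟩ := (mem_squareSet' hnL).mp hu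
  have h1 : ∃ w : Site L, (w ∈ (squareSet L n x).filter fun w => torusAdj L u w)
      ∧ w.2 = u.2 ∧ w.1 ≠ u.1 := by
    by_cases hc : (u.1 - x.1).val + 1 < n
    · refine ⟨u + ((1:ZMod L), (0:ZMod L)), ?_, ?_, ?_⟩
      · rw [mem_filter]
        constructor
        · rw [mem_shift hnL]
          simp only [add_zero]
          rw [val_add_one' hL1]
          exact ⟨by split_ifs <;> omega, hB⟩
        · right; left
          have e : u - (u + ((1:ZMod L), (0:ZMod L))) = -(((1:ZMod L), (0:ZMod L)) : Site L) := by
            ring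
          rw [e]; ext <;> simp
      · show u.2 + 0 = u.2; ring
      · show u.1 + 1 ≠ u.1
        intro h
        have h0 : (1 : ZMod L) = 0 := by
          have h2 := congrArg (· - u.1) h
          simpa using h2
        exact one_ne_zero3 (by omega) h0
    · refine ⟨u - ((1:ZMod L), (0:ZMod L)), ?_, ?_, ?_⟩
      · rw [mem_filter]
        constructor
        · rw [mem_shift' hnL]
          simp only [sub_zero]
          rw [val_sub_one' hL1]
          exact ⟨by split_ifs <;> omega, hB⟩
        · left
          have e : u - (u - ((1:ZMod L), (0:ZMod L))) = (((1:ZMod L), (0:ZMod L)) : Site L) := by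
            ring
          rw [e]
      · show u.2 - 0 = u.2; ring
      · show u.1 - 1 ≠ u.1
        intro h
        exact one_ne_zero3 (by omega) (sub_eq_self.mp h)
  have h2 : ∃ w : Site L, (w ∈ (squareSet L n x).filter fun w => torusAdj L u w)
      ∧ w.1 = u.1 ∧ w.2 ≠ u.2 := by
    by_cases hc : (u.2 - x.2).val + 1 < n
    · refine ⟨u + ((0:ZMod L), (1:ZMod L)), ?_, ?_, ?_⟩
      · rw [mem_filter]
        constructor
        · rw [mem_shift hnL]
          simp only [add_zero]
          rw [val_add_one' hL1]
          exact ⟨hA, by split_ifs <;> omega⟩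
        · right; right; right
          have e : u - (u + ((0:ZMod L), (1:ZMod L))) = -(((0:ZMod L), (1:ZMod L)) : Site L) := by
            ring
          rw [e]; ext <;> simp
      · show u.1 + 0 = u.1; ring
      · show u.2 + 1 ≠ u.2
        intro h
        have h0 : (1 : ZMod L) = 0 := by
          have h2 := congrArg (· - u.2) h
          simpa using h2
        exact one_ne_zero3 (by omega) h0
    · refine ⟨u - ((0:ZMod L), (1:ZMod L)), ?_, ?_, ?_⟩
      · rw [mem_filter]
        constructor
        · rw [mem_shift' hnL]
          simp only [sub_zero]
          rw [val_sub_one' hL1]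
          exact ⟨hA, by split_ifs <;> omega⟩
        · right; right; left
          have e : u - (u - ((0:ZMod L), (1:ZMod L))) = (((0:ZMod L), (1:ZMod L)) : Site L) := by
            ring
          rw [e]
      · show u.1 - 0 = u.1; ring
      · show u.2 - 1 ≠ u.2
        intro h
        exact one_ne_zero3 (by omega) (sub_eq_self.mp h)
  obtain ⟨w1, hw1, hw1e, hw1ne⟩ := h1
  obtain ⟨w2, hw2, hw2e, hw2ne⟩ := h2
  refine Finset.one_lt_card.mpr ⟨w1, hw1, w2, hw2, ?_⟩
  intro h
  exact hw1ne (by rw [h]; exact hw2e)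

lemma swapConf_comm (η : Config L) (u v : Site L) :
    swapConf L η u v = swapConf L η v u := by
  funext z
  simp only [swapConf]
  by_cases h1 : z = u <;> by_cases h2 : z = v
  · rw [if_pos h1, if_pos h2]
    have huv : u = v := h1.symm.trans h2
    rw [huv]
  · simp only [if_pos h1, if_neg h2]
  · simp only [if_neg h1, if_pos h2]
  · simp [h1, h2]

lemma occupied_square {n : ℕ} (x : Site L) :
    occupied L (squareConf L n x) = squareSet L n x := by
  ext z; simp [occupied, squareConf]

lemma occupied_swap {n : ℕ} {x u v : Site L} (hu : u ∈ squareSet L n x)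
    (hv : v ∉ squareSet L n x) :
    occupied L (swapConf L (squareConf L n x) u v)
      = insert v ((squareSet L n x).erase u) := by
  have huvne : u ≠ v := fun h => hv (h ▸ hu)
  ext z
  simp only [occupied, Finset.mem_filter, Finset.mem_univ, true_and]
  simp only [swapConf, squareConf,
    Finset.mem_insert, Finset.mem_erase, decide_eq_true_eq]
  by_cases hz1 : z = u
  · rw [if_pos hz1, hz1]
    simp [hv, huvne]
  · by_cases hz2 : z = v
    · rw [if_neg hz1, if_pos hz2, hz2]
      simp [hu]
    · rw [if_neg hz1, if_neg hz2]
      simp [hz1, hz2]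

lemma nbr_erase_eq {n : ℕ} (hL : 2 < L) {x u : Site L} :
    ((squareSet L n x).erase u).filter (fun w => torusAdj L u w)
      = (squareSet L n x).filter (fun w => torusAdj L u w) := by
  ext w
  simp only [Finset.mem_filter, Finset.mem_erase]
  constructor
  · rintro ⟨⟨_, hwQ⟩, ha⟩; exact ⟨hwQ, ha⟩
  · rintro ⟨hwQ, ha⟩
    exact ⟨⟨fun h => torusAdj_irrefl hL u (h ▸ ha), hwQ⟩, ha⟩

lemma core_move {n : ℕ} (hn : 4 ≤ n) (hL : 2 * n < L) {x u v : Site L}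
    (huv : torusAdj L u v) (hu : u ∈ squareSet L n x) (hv : v ∉ squareSet L n x) :
    confH L (squareConf L n x) + 2 ≤ confH L (swapConf L (squareConf L n x) u v) := by
  have hL2 : 2 < L := by omega
  have hvE : v ∉ (squareSet L n x).erase u := fun h => hv (Finset.mem_of_mem_erase h)
  have hins := card_pairs_insert hL2 hvE
  rw [no_nbrs hn hL huv hu hv, Finset.card_empty, Nat.mul_zero, Nat.add_zero] at hins
  have hers := card_pairs_erase hL2 hu
  have hnb : 2 ≤ (((squareSet L n x).erase u).filter fun w => torusAdj L u w).card := by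
    rw [nbr_erase_eq hL2]
    exact two_nbrs hn hL hu
  have hsq := E2_square hn hL x
  rw [confH, confH, occupied_square, occupied_swap hu hv, torusE, torusE, hins]
  rw [hsq] at hers
  omega

end MoveHelpers

/-- every nontrivial single particle move from a square configuration
raises the energy by at least `2`; moreover `H(η^x) = −2n(n−1)`. -/
theorem square_move_energy (n L : ℕ) [NeZero L] (hn : 4 ≤ n) (hL : 2 * n < L)
    (x u v : Site L) (huv : torusAdj L u v)
    (hne : squareConf L n x u ≠ squareConf L n x v) :
    confH L (squareConf L n x) + 2 ≤ confH L (swapConf L (squareConf L n x) u v)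
    ∧ confH L (squareConf L n x) = -(2 * (n : ℤ) * ((n : ℤ) - 1)) := by
  have hL2 : 2 < L := by omega
  have hH : confH L (squareConf L n x) = -(2 * (n : ℤ) * ((n : ℤ) - 1)) := by
    rw [confH, occupied_square, torusE, E2_square hn hL x]
    have e : 4 * (n * (n - 1)) / 2 = 2 * (n * (n - 1)) := by omega
    rw [e]
    push_cast [Nat.cast_sub (by omega : 1 ≤ n)]
    ring
  refine ⟨?_, hH⟩
  by_cases hu : u ∈ squareSet L n x
  · have hv : v ∉ squareSet L n x := by
      intro h
      exact hne (by simp [squareConf, hu, h])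
    exact core_move hn hL huv hu hv
  · have hv : v ∈ squareSet L n x := by
      by_contra hv
      exact hne (by simp [squareConf, hu, hv])
    rw [swapConf_comm]
    exact core_move hn hL (torusAdj_symm huv) hv hu
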